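/- For every ε ∈ (0, 1/2) there exist a constant C > 0 and a threshold N such that for every prime p ≥ N, every primitive root τ modulo p, every divisor d of p − 1, and every integer a with 1 ≤ a ≤ p − 1, the complete exponential sum over reduced residues satisfies |Σ_{1 ≤ n ≤ (p−1)/d, gcd(n, (p−1)/d) = 1} e(a τ^{dn} / p)| ≤ C p^{1−ε}. -/

import Mathlib

open Finset ArithmeticFunction

/-- `e z = exp(2 π i z)`. -/
noncomputable def e (z : ℝ) : ℂ := Complex.exp (2 * Real.pi * Complex.I * z)

lemma e_eq_char {p : ℕ} [NeZero p] (m : ℕ) :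
    e ((m : ℝ) / p) = ZMod.stdAddChar (m : ZMod p) := by
  have h := ZMod.stdAddChar_coe (N := p) (m : ℤ)
  rw [Int.cast_natCast] at h
  rw [h, e]
  congr 1
  push_cast
  ring

lemma abs_char {p : ℕ} [NeZero p] (x : ZMod p) :
    ‖ZMod.stdAddChar x‖ = 1 := by
  rw [ZMod.stdAddChar_apply]
  exact Circle.norm_coe _

lemma conj_char {p : ℕ} [NeZero p] (x : ZMod p) :
    (starRingEnd ℂ) (ZMod.stdAddChar x) = ZMod.stdAddChar (-x) := by
  rw [AddChar.map_neg_eq_inv, ← Complex.inv_eq_conj (abs_char x)]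

lemma sum_range_shift (F : ℕ → ℂ) (r : ℕ) (h : F r = F 0) :
    ∑ i ∈ Finset.range r, F (i + 1) = ∑ i ∈ Finset.range r, F i := by
  have h1 := Finset.sum_range_succ' F r
  have h2 := Finset.sum_range_succ F r
  linear_combination h2 - h1 + h

lemma key_bound {p : ℕ} [NeZero p] (hp : p.Prime) (g b : ZMod p) (hb : b ≠ 0) (hr : 0 < orderOf g) :
    ‖∑ m ∈ Finset.range (orderOf g), ZMod.stdAddChar (b * g ^ m)‖ ≤
      Real.sqrt p := by
  haveI : Fact p.Prime := ⟨hp⟩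
  set r := orderOf g with hrdef
  have hg : g ≠ 0 := by
    rintro rfl
    have h1 := pow_orderOf_eq_one (0 : ZMod p)
    rw [zero_pow hr.ne'] at h1
    exact zero_ne_one h1
  -- injectivity of powers below r
  have hinj : ∀ m ∈ Finset.range r, ∀ m' ∈ Finset.range r, g ^ m = g ^ m' → m = m' := by
    intro m hm m' hm' hmm
    set u : (ZMod p)ˣ := Units.mk0 g hg with hu
    have hgu : g = (u : ZMod p) := rfl
    have hou : orderOf u = r := by rw [hrdef, hgu, orderOf_units]
    have : u ^ m = u ^ m' := by
      apply Units.ext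
      push_cast [hgu] at hmm ⊢
      exact hmm
    refine pow_injOn_Iio_orderOf ?_ ?_ this
    · simp only [Set.mem_Iio, hou]; exact Finset.mem_range.mp hm
    · simp only [Set.mem_Iio, hou]; exact Finset.mem_range.mp hm'
  set T : ZMod p → ℂ := fun c => ∑ m ∈ Finset.range r, ZMod.stdAddChar (c * g ^ m) with hT
  -- shift invariance
  have hTg : ∀ c : ZMod p, T (c * g) = T c := by
    intro c
    have hone : g ^ r = 1 := pow_orderOf_eq_one g
    have hF : (fun i => ZMod.stdAddChar (c * g ^ i)) r = (fun i => ZMod.stdAddChar (c * g ^ i)) 0 := by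
      simp [hone]
    have hshift := sum_range_shift (fun i => ZMod.stdAddChar (c * g ^ i)) r hF
    have : T (c * g) = ∑ m ∈ Finset.range r, ZMod.stdAddChar (c * g ^ (m + 1)) := by
      apply Finset.sum_congr rfl
      intro m _
      congr 1
      rw [pow_succ]
      ring
    rw [this, hshift]
  have hTgj : ∀ c : ZMod p, ∀ j : ℕ, T (c * g ^ j) = T c := by
    intro c j
    induction j with
    | zero => simp
    | succ n ih => rw [pow_succ, ← mul_assoc, hTg, ih]
  -- orthogonality total
  have horth : ∀ u : ZMod p, ∑ c : ZMod p, ZMod.stdAddChar (c * u)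
      = if u = 0 then (p : ℂ) else 0 := by
    intro u
    have h := AddChar.sum_mulShift u (ZMod.isPrimitive_stdAddChar p)
    simpa [ZMod.card, apply_ite (Nat.cast : ℕ → ℂ)] using h
  have htotal : ∑ c : ZMod p, Complex.normSq (T c) = (p : ℝ) * r := by
    have hC : ∑ c : ZMod p, ((Complex.normSq (T c) : ℂ)) = (p : ℂ) * r := by
      have expand : ∀ c : ZMod p, ((Complex.normSq (T c) : ℂ)) =
          ∑ m ∈ Finset.range r, ∑ m' ∈ Finset.range r,
            ZMod.stdAddChar (c * (g ^ m - g ^ m')) := by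
        intro c
        rw [← Complex.mul_conj, hT]
        simp only [map_sum, conj_char]
        rw [Finset.sum_mul_sum]
        apply Finset.sum_congr rfl; intro m _
        apply Finset.sum_congr rfl; intro m' _
        rw [← AddChar.map_add_eq_mul]
        congr 1
        ring
      calc ∑ c : ZMod p, ((Complex.normSq (T c) : ℂ))
          = ∑ c : ZMod p, ∑ m ∈ Finset.range r, ∑ m' ∈ Finset.range r,
            ZMod.stdAddChar (c * (g ^ m - g ^ m')) := by
            exact Finset.sum_congr rfl fun c _ => expand c
        _ = ∑ m ∈ Finset.range r, ∑ m' ∈ Finset.range r, ∑ c : ZMod p,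
            ZMod.stdAddChar (c * (g ^ m - g ^ m')) := by
            rw [Finset.sum_comm]
            apply Finset.sum_congr rfl; intro m _
            rw [Finset.sum_comm]
        _ = ∑ m ∈ Finset.range r, ∑ m' ∈ Finset.range r,
            (if m' = m then (p : ℂ) else 0) := by
            apply Finset.sum_congr rfl; intro m hm
            apply Finset.sum_congr rfl; intro m' hm'
            rw [horth]
            congr 1
            simp only [sub_eq_zero, eq_iff_iff]
            constructor
            · intro h; exact (hinj m' hm' m hm h.symm)
            · rintro rfl; rfl
        _ = ∑ m ∈ Finset.range r, (p : ℂ) := by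
            apply Finset.sum_congr rfl; intro m hm
            rw [Finset.sum_ite_eq' (Finset.range r) m (fun _ => (p : ℂ))]
            simp [hm]
        _ = (p : ℂ) * r := by simp [mul_comm]
    have := hC
    rw [← Complex.ofReal_sum] at this
    have h2 : ((∑ c : ZMod p, Complex.normSq (T c) : ℝ) : ℂ) = (((p : ℝ) * r : ℝ) : ℂ) := by
      rw [this]; push_cast; ring
    exact_mod_cast h2
  -- the image of cosets
  have himg : ((Finset.range r).image (fun j => b * g ^ j)).card = r := by
    rw [Finset.card_image_of_injOn, Finset.card_range]
    intro m hm m' hm' h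
    exact hinj m (Finset.mem_coe.mp hm) m' (Finset.mem_coe.mp hm') (mul_left_cancel₀ hb h)
  have hle : (r : ℝ) * Complex.normSq (T b) ≤ (p : ℝ) * r := by
    have h1 : ∑ c ∈ (Finset.range r).image (fun j => b * g ^ j), Complex.normSq (T c)
        = (r : ℝ) * Complex.normSq (T b) := by
      rw [Finset.sum_image]
      · rw [Finset.sum_congr rfl (fun j _ => by rw [hTgj])]
        simp [mul_comm]
      · intro m hm m' hm' h
        exact hinj m hm m' hm' (mul_left_cancel₀ hb h)
    rw [← h1, ← htotal]
    apply Finset.sum_le_sum_of_subset_of_nonneg (Finset.subset_univ _)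
    intro c _ _
    exact Complex.normSq_nonneg _
  have hns : Complex.normSq (T b) ≤ (p : ℝ) := by
    have hr' : (0 : ℝ) < r := by exact_mod_cast hr
    nlinarith
  calc ‖T b‖ = Real.sqrt (Complex.normSq (T b)) := Complex.norm_def _
    _ ≤ Real.sqrt p := Real.sqrt_le_sqrt hns

lemma sqfree_div_count (δ : ℝ) (hδ : 0 < δ) :
    ∃ K : ℝ, 1 ≤ K ∧ ∀ n : ℕ, n ≠ 0 →
      (((n.divisors.filter Squarefree).card : ℝ)) ≤ K * (n : ℝ) ^ δ := by
  set B : ℕ := ⌈(2 : ℝ) ^ (1 / δ)⌉₊ with hB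
  refine ⟨2 ^ B, one_le_pow₀ (by norm_num), ?_⟩
  intro n hn
  -- step 1 : card ≤ 2 ^ ω(n)
  have step1 : (n.divisors.filter Squarefree).card ≤ 2 ^ n.primeFactors.card := by
    rw [← Finset.card_powerset]
    apply Finset.card_le_card_of_injOn (fun k => k.primeFactors)
    · intro k hk
      simp only [Finset.coe_filter, Set.mem_setOf_eq, Finset.mem_filter, Nat.mem_divisors] at hk
      rw [Finset.mem_coe, Finset.mem_powerset]
      exact Nat.primeFactors_mono hk.1.1 hn
    · intro k hk k' hk' h
      simp only [Finset.coe_filter, Set.mem_setOf_eq, Nat.mem_divisors] at hk hk'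
      have h' : k.primeFactors = k'.primeFactors := h
      rw [← Nat.prod_primeFactors_of_squarefree hk.2, ← Nat.prod_primeFactors_of_squarefree hk'.2, h']
  -- step 2 : 2 ^ ω(n) ≤ 2^B * n^δ
  have step2 : ((2 : ℝ)) ^ n.primeFactors.card ≤ (2 : ℝ) ^ B * (n : ℝ) ^ δ := by
    have hsplit : ((2 : ℝ)) ^ n.primeFactors.card
        = (∏ q ∈ n.primeFactors.filter (fun q => q < B), (2 : ℝ)) *
          (∏ q ∈ n.primeFactors.filter (fun q => ¬ q < B), (2 : ℝ)) := by
      rw [Finset.prod_filter_mul_prod_filter_not, Finset.prod_const]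
    have hsmall : (∏ q ∈ n.primeFactors.filter (fun q => q < B), (2 : ℝ)) ≤ 2 ^ B := by
      rw [Finset.prod_const]
      apply pow_le_pow_right₀ (by norm_num)
      calc (n.primeFactors.filter (fun q => q < B)).card ≤ (Finset.range B).card := by
            apply Finset.card_le_card
            intro q hq
            simp only [Finset.mem_filter] at hq
            exact Finset.mem_range.mpr hq.2
        _ = B := Finset.card_range B
    have hlarge : (∏ q ∈ n.primeFactors.filter (fun q => ¬ q < B), (2 : ℝ)) ≤ (n : ℝ) ^ δ := by
      have h1 : (∏ q ∈ n.primeFactors.filter (fun q => ¬ q < B), (2 : ℝ)) ≤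
          ∏ q ∈ n.primeFactors.filter (fun q => ¬ q < B), ((q : ℝ)) ^ δ := by
        apply Finset.prod_le_prod
        · intro q _; norm_num
        · intro q hq
          simp only [Finset.mem_filter, not_lt] at hq
          have hq2 : (2 : ℝ) ^ (1 / δ) ≤ (q : ℝ) :=
            le_trans (Nat.le_ceil _) (by exact_mod_cast hq.2)
          calc (2 : ℝ) = ((2 : ℝ) ^ (1 / δ)) ^ δ := by
                rw [← Real.rpow_mul (by norm_num : (0:ℝ) ≤ 2), one_div_mul_cancel hδ.ne',
                  Real.rpow_one]
            _ ≤ (q : ℝ) ^ δ := by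
                apply Real.rpow_le_rpow (Real.rpow_nonneg (by norm_num) _) hq2 hδ.le
      have h2 : ∏ q ∈ n.primeFactors.filter (fun q => ¬ q < B), ((q : ℝ)) ^ δ
          = ((∏ q ∈ n.primeFactors.filter (fun q => ¬ q < B), (q : ℕ) : ℕ) : ℝ) ^ δ := by
        rw [Real.finset_prod_rpow _ _ (fun q _ => by positivity) δ, ← Nat.cast_prod]
      have h3 : (∏ q ∈ n.primeFactors.filter (fun q => ¬ q < B), (q : ℕ)) ≤ n := by
        apply Nat.le_of_dvd (Nat.pos_of_ne_zero hn)
        exact dvd_trans (Finset.prod_dvd_prod_of_subset _ _ _ (Finset.filter_subset _ _))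
          (Nat.prod_primeFactors_dvd n)
      calc (∏ q ∈ n.primeFactors.filter (fun q => ¬ q < B), (2 : ℝ)) ≤ _ := h1
        _ = _ := h2
        _ ≤ (n : ℝ) ^ δ := by
            apply Real.rpow_le_rpow (by positivity) (by exact_mod_cast h3) hδ.le
    calc ((2 : ℝ)) ^ n.primeFactors.card
        = _ := hsplit
      _ ≤ 2 ^ B * (n : ℝ) ^ δ := by
          apply mul_le_mul hsmall hlarge (Finset.prod_nonneg (fun q _ => by norm_num)) (by positivity)
  calc ((n.divisors.filter Squarefree).card : ℝ) ≤ ((2 : ℕ) ^ n.primeFactors.card : ℕ) := by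
        exact_mod_cast step1
    _ = ((2 : ℝ)) ^ n.primeFactors.card := by push_cast; ring
    _ ≤ (2 : ℝ) ^ B * (n : ℝ) ^ δ := step2

lemma sum_moebius_divisors (n : ℕ) (hn : n ≠ 0) :
    ∑ k ∈ n.divisors, (ArithmeticFunction.moebius k : ℤ) = if n = 1 then 1 else 0 := by
  have h := congrArg (fun f => f n) ArithmeticFunction.moebius_mul_coe_zeta
  simp only [ArithmeticFunction.mul_apply, ArithmeticFunction.one_apply] at h
  rw [Nat.sum_divisorsAntidiagonal
    (fun a b => (moebius a : ℤ) * (ArithmeticFunction.zeta : ArithmeticFunction ℤ) b)] at h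
  rw [← h]
  apply Finset.sum_congr rfl
  intro k hk
  rw [Nat.mem_divisors] at hk
  have hk0 : k ≠ 0 := by rintro rfl; exact hn (zero_dvd_iff.mp hk.1)
  have hnk : n / k ≠ 0 :=
    (Nat.div_pos (Nat.le_of_dvd (Nat.pos_of_ne_zero hn) hk.1) (Nat.pos_of_ne_zero hk0)).ne'
  simp [ArithmeticFunction.natCoe_apply, ArithmeticFunction.zeta_apply_ne hnk]

lemma moebius_split {M : ℕ} (hM : M ≠ 0) (f : ℕ → ℂ) :
    ∑ n ∈ (Finset.Icc 1 M).filter (fun n => Nat.gcd n M = 1), f n =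
    ∑ k ∈ M.divisors, (ArithmeticFunction.moebius k : ℂ) *
      ∑ m ∈ Finset.Icc 1 (M / k), f (k * m) := by
  rw [Finset.sum_filter]
  have h1 : ∀ n ∈ Finset.Icc 1 M, (if Nat.gcd n M = 1 then f n else 0)
      = ∑ k ∈ M.divisors.filter (· ∣ n), (ArithmeticFunction.moebius k : ℂ) * f n := by
    intro n hn
    have hgne : Nat.gcd n M ≠ 0 := Nat.gcd_ne_zero_right hM
    have hdiv : M.divisors.filter (· ∣ n) = (Nat.gcd n M).divisors := by
      ext k
      simp only [Finset.mem_filter, Nat.mem_divisors, Nat.dvd_gcd_iff]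
      constructor
      · rintro ⟨⟨hkM, _⟩, hkn⟩; exact ⟨⟨hkn, hkM⟩, hgne⟩
      · rintro ⟨⟨hkn, hkM⟩, _⟩; exact ⟨⟨hkM, hM⟩, hkn⟩
    rw [hdiv, ← Finset.sum_mul]
    have hmu := sum_moebius_divisors (Nat.gcd n M) hgne
    have hmuC : (∑ k ∈ (Nat.gcd n M).divisors, (ArithmeticFunction.moebius k : ℂ))
        = if Nat.gcd n M = 1 then (1:ℂ) else 0 := by
      have h5 := congrArg (fun z : ℤ => (z : ℂ)) hmu
      push_cast [apply_ite (fun z : ℤ => (z : ℂ))] at h5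
      exact h5
    rw [hmuC]
    split_ifs <;> simp
  rw [Finset.sum_congr rfl h1]
  have h2 : ∀ n ∈ Finset.Icc 1 M,
      ∑ k ∈ M.divisors.filter (· ∣ n), (ArithmeticFunction.moebius k : ℂ) * f n
      = ∑ k ∈ M.divisors, if k ∣ n then (ArithmeticFunction.moebius k : ℂ) * f n else 0 := by
    intro n _
    rw [Finset.sum_filter]
  rw [Finset.sum_congr rfl h2, Finset.sum_comm]
  apply Finset.sum_congr rfl
  intro k hk
  rw [Nat.mem_divisors] at hk
  have hk0 : k ≠ 0 := by rintro rfl; exact hM (zero_dvd_iff.mp hk.1)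
  have himg : (Finset.Icc 1 M).filter (fun n => k ∣ n) = (Finset.Icc 1 (M / k)).image (k * ·) := by
    ext n
    simp only [Finset.mem_filter, Finset.mem_Icc, Finset.mem_image]
    constructor
    · rintro ⟨⟨h1n, h2n⟩, m, rfl⟩
      refine ⟨m, ⟨?_, ?_⟩, rfl⟩
      · rcases Nat.eq_zero_or_pos m with h | h
        · subst h; simp at h1n
        · exact h
      · rw [Nat.le_div_iff_mul_le (Nat.pos_of_ne_zero hk0)]
        calc m * k = k * m := mul_comm m k
          _ ≤ M := h2n
    · rintro ⟨m, ⟨hm1, hm2⟩, rfl⟩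
      refine ⟨⟨?_, ?_⟩, Dvd.intro m rfl⟩
      · exact Nat.one_le_iff_ne_zero.mpr (Nat.mul_ne_zero hk0 (by omega))
      · calc k * m ≤ k * (M / k) := Nat.mul_le_mul_left k hm2
          _ = M := Nat.mul_div_cancel' hk.1
  calc ∑ n ∈ Finset.Icc 1 M, (if k ∣ n then (ArithmeticFunction.moebius k : ℂ) * f n else 0)
      = ∑ n ∈ (Finset.Icc 1 M).filter (fun n => k ∣ n), (ArithmeticFunction.moebius k : ℂ) * f n := by
        rw [Finset.sum_filter]
    _ = ∑ m ∈ Finset.Icc 1 (M / k), (ArithmeticFunction.moebius k : ℂ) * f (k * m) := by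
        rw [himg, Finset.sum_image]
        intro m _ m' _ h
        exact Nat.eq_of_mul_eq_mul_left (Nat.pos_of_ne_zero hk0) h
    _ = (ArithmeticFunction.moebius k : ℂ) * ∑ m ∈ Finset.Icc 1 (M / k), f (k * m) := by
        rw [Finset.mul_sum]

lemma Icc_to_range (F : ℕ → ℂ) (r : ℕ) (h : F r = F 0) :
    ∑ m ∈ Finset.Icc 1 r, F m = ∑ m ∈ Finset.range r, F m := by
  have h1 : Finset.range (r + 1) = insert 0 (Finset.Icc 1 r) := by
    ext m
    simp only [Finset.mem_range, Finset.mem_insert, Finset.mem_Icc]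
    omega
  have h2 : (0 : ℕ) ∉ Finset.Icc 1 r := by simp
  have h3 := Finset.sum_range_succ F r
  rw [h1, Finset.sum_insert h2] at h3
  linear_combination h3 + h


/-- complete exponential sum over reduced residues. -/
theorem stmt_13 (ε : ℝ) (hε : ε ∈ Set.Ioo (0 : ℝ) (1 / 2)) :
    ∃ C > (0 : ℝ), ∃ N : ℕ, ∀ p : ℕ, p.Prime → N ≤ p →
    ∀ τ : ℤ, orderOf ((τ : ZMod p)) = p - 1 →
    ∀ d : ℕ, d ∣ p - 1 → ∀ a : ℕ, 1 ≤ a → a ≤ p - 1 →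
    ‖(∑ n ∈ (Finset.Icc 1 ((p - 1) / d)).filter
        (fun n => Nat.gcd n ((p - 1) / d) = 1),
        e ((a * ((τ : ZMod p) ^ (d * n)).val : ℕ) / p))‖ ≤
      C * (p : ℝ) ^ (1 - ε) := by
  obtain ⟨hε0, hε2⟩ := hε
  set δ : ℝ := 1 / 2 - ε with hδdef
  have hδ : 0 < δ := by rw [hδdef]; linarith
  obtain ⟨K, hK1, hK⟩ := sqfree_div_count δ hδ
  refine ⟨K, by linarith, 2, ?_⟩
  intro p hp hNp τ hτ d hd a ha1 ha2
  haveI : Fact p.Prime := ⟨hp⟩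
  haveI : NeZero p := ⟨hp.pos.ne'⟩
  set t : ZMod p := ((τ : ℤ) : ZMod p) with ht
  set M : ℕ := (p - 1) / d with hMdef
  have hp2 : 2 ≤ p := hp.two_le
  have hp1 : p - 1 ≠ 0 := by omega
  have hd0 : d ≠ 0 := by rintro rfl; exact hp1 (zero_dvd_iff.mp hd)
  have hM0 : M ≠ 0 :=
    (Nat.div_pos (Nat.le_of_dvd (Nat.pos_of_ne_zero hp1) hd) (Nat.pos_of_ne_zero hd0)).ne'
  have hdM : d * M = p - 1 := Nat.mul_div_cancel' hd
  have hb : (a : ZMod p) ≠ 0 := by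
    rw [Ne, ZMod.natCast_eq_zero_iff]
    intro hpa
    have := Nat.le_of_dvd (by omega) hpa
    omega
  have hterm : ∀ n : ℕ, e ((a * (t ^ (d * n)).val : ℕ) / p)
      = ZMod.stdAddChar ((a : ZMod p) * t ^ (d * n)) := by
    intro n
    rw [e_eq_char]
    congr 1
    push_cast [ZMod.natCast_val, ZMod.cast_id]
    ring_nf
  rw [Finset.sum_congr rfl (fun n _ => hterm n)]
  rw [moebius_split hM0 (fun n => ZMod.stdAddChar ((a : ZMod p) * t ^ (d * n)))]
  have hinner : ∀ k ∈ M.divisors,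
      ‖(∑ m ∈ Finset.Icc 1 (M / k),
        ZMod.stdAddChar ((a : ZMod p) * t ^ (d * (k * m))))‖ ≤ Real.sqrt p := by
    intro k hk
    rw [Nat.mem_divisors] at hk
    have hk0 : k ≠ 0 := by rintro rfl; exact hM0 (zero_dvd_iff.mp hk.1)
    set g : ZMod p := t ^ (d * k) with hg
    have hdk : d * k ∣ p - 1 := by
      obtain ⟨c, hc⟩ := hk.1
      exact ⟨c, by rw [← hdM, hc]; ring⟩
    have hord : orderOf g = M / k := by
      rw [hg, orderOf_pow' t (by positivity), hτ, Nat.gcd_eq_right hdk,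
        hMdef, Nat.div_div_eq_div_mul]
    have hordpos : 0 < orderOf g := by
      rw [hord]
      exact Nat.div_pos (Nat.le_of_dvd (Nat.pos_of_ne_zero hM0) hk.1) (Nat.pos_of_ne_zero hk0)
    have hpowm : ∀ m : ℕ, t ^ (d * (k * m)) = g ^ m := by
      intro m
      rw [hg, ← pow_mul, mul_assoc]
    have hconv : ∑ m ∈ Finset.Icc 1 (M / k),
          ZMod.stdAddChar ((a : ZMod p) * t ^ (d * (k * m)))
        = ∑ m ∈ Finset.range (orderOf g), ZMod.stdAddChar ((a : ZMod p) * g ^ m) := by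
      rw [Finset.sum_congr rfl (fun m _ => by rw [hpowm m]), ← hord]
      exact Icc_to_range (fun m => ZMod.stdAddChar ((a : ZMod p) * g ^ m)) (orderOf g)
        (by simp [pow_orderOf_eq_one])
    rw [hconv]
    exact key_bound hp g (a : ZMod p) hb hordpos
  calc ‖(∑ k ∈ M.divisors, (ArithmeticFunction.moebius k : ℂ) *
          ∑ m ∈ Finset.Icc 1 (M / k), ZMod.stdAddChar ((a : ZMod p) * t ^ (d * (k * m))))‖
      ≤ ∑ k ∈ M.divisors, ‖((ArithmeticFunction.moebius k : ℂ) *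
          ∑ m ∈ Finset.Icc 1 (M / k), ZMod.stdAddChar ((a : ZMod p) * t ^ (d * (k * m))))‖ :=
        norm_sum_le _ _
    _ ≤ ∑ k ∈ M.divisors, (if Squarefree k then Real.sqrt p else 0) := by
        apply Finset.sum_le_sum
        intro k hk
        rw [norm_mul]
        by_cases hsq : Squarefree k
        · rw [if_pos hsq]
          have h1 : ‖((ArithmeticFunction.moebius k : ℂ))‖ = 1 := by
            rw [Complex.norm_intCast, ArithmeticFunction.moebius_apply_of_squarefree hsq]
            simp
          rw [h1, one_mul]
          exact hinner k hk
        · rw [if_neg hsq, ArithmeticFunction.moebius_eq_zero_of_not_squarefree hsq]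
          simp
    _ = ((M.divisors.filter Squarefree).card : ℝ) * Real.sqrt p := by
        rw [← Finset.sum_filter, Finset.sum_const, nsmul_eq_mul]
    _ ≤ (K * (M : ℝ) ^ δ) * Real.sqrt p := by
        apply mul_le_mul_of_nonneg_right (hK M hM0) (Real.sqrt_nonneg _)
    _ ≤ (K * (p : ℝ) ^ δ) * Real.sqrt p := by
        apply mul_le_mul_of_nonneg_right _ (Real.sqrt_nonneg _)
        apply mul_le_mul_of_nonneg_left _ (by linarith)
        apply Real.rpow_le_rpow (Nat.cast_nonneg _) _ hδ.le
        have : M ≤ p := le_trans (Nat.div_le_self _ _) (by omega)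
        exact_mod_cast this
    _ = K * (p : ℝ) ^ (1 - ε) := by
        rw [Real.sqrt_eq_rpow, mul_assoc, ← Real.rpow_add (by positivity)]
        congr 1
        rw [hδdef]
        ring_nf
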